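/- The general solution of the Riccati equation y' − y² + (1/2)y(e^x/λ)(1+e^x/λ)^{−1} + (1/4)(1+e^x/λ)^{−1} = 0 obtained by this construction is y(x) = (1/2)·((a e^{−I} + 1)/(a e^{−I} − 1))·(1 + e^x/λ)^{−1/2}, i.e., this function is a solution for every constant a. -/

import Mathlib

/-- For `λ > 0`, `a ∈ ℝ`, and `I` an antiderivative of `(1+e^x/λ)^{−1/2}`,
the function `y(x) = (1/2)((a e^{−I}+1)/(a e^{−I}−1))(1+e^x/λ)^{−1/2}` solves the
Riccati equation `y' − y² + (1/2)y(e^x/λ)(1+e^x/λ)^{−1} + (1/4)(1+e^x/λ)^{−1} = 0`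
wherever `a e^{−I(x)} ≠ 1`. -/
theorem riccati_general_solution (lam a : ℝ) (hlam : 0 < lam)
    (I : ℝ → ℝ)
    (hI : ∀ x, HasDerivAt I ((Real.sqrt (1 + Real.exp x / lam))⁻¹) x)
    (y : ℝ → ℝ)
    (hy : ∀ x, y x = (1 / 2) * ((a * Real.exp (-I x) + 1) / (a * Real.exp (-I x) - 1))
        * (Real.sqrt (1 + Real.exp x / lam))⁻¹)
    (x : ℝ) (hx : a * Real.exp (-I x) ≠ 1) :
    HasDerivAt y
      ((y x) ^ 2 - (1 / 2) * y x * (Real.exp x / lam) * (1 + Real.exp x / lam)⁻¹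
        - (1 / 4) * (1 + Real.exp x / lam)⁻¹) x := by
  have hfun : y = fun t => (1 / 2) * ((a * Real.exp (-I t) + 1) / (a * Real.exp (-I t) - 1))
      * (Real.sqrt (1 + Real.exp t / lam))⁻¹ := funext hy
  subst hfun
  have hpos : (0:ℝ) < 1 + Real.exp x / lam := by positivity
  have hsq : Real.sqrt (1 + Real.exp x / lam) ^ 2 = 1 + Real.exp x / lam :=
    Real.sq_sqrt hpos.le
  have hsne : Real.sqrt (1 + Real.exp x / lam) ≠ 0 :=
    ne_of_gt (Real.sqrt_pos.mpr hpos)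
  have hdne : a * Real.exp (-I x) - 1 ≠ 0 := sub_ne_zero.mpr hx
  have hE : HasDerivAt (fun t => 1 + Real.exp t / lam) (Real.exp x / lam) x :=
    ((Real.hasDerivAt_exp x).div_const lam).const_add 1
  have hs : HasDerivAt (fun t => Real.sqrt (1 + Real.exp t / lam))
      (1 / (2 * Real.sqrt (1 + Real.exp x / lam)) * (Real.exp x / lam)) x :=
    (Real.hasDerivAt_sqrt hpos.ne').comp x hE
  have hg : HasDerivAt (fun t => (Real.sqrt (1 + Real.exp t / lam))⁻¹)
      (-(1 / (2 * Real.sqrt (1 + Real.exp x / lam)) * (Real.exp x / lam))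
        / (Real.sqrt (1 + Real.exp x / lam)) ^ 2) x := hs.inv hsne
  have hu : HasDerivAt (fun t => a * Real.exp (-I t))
      (a * (Real.exp (-I x) * -(Real.sqrt (1 + Real.exp x / lam))⁻¹)) x :=
    ((hI x).neg.exp).const_mul a
  have hq := ((hu.add_const 1).div (hu.sub_const 1) hdne).const_mul (1/2 : ℝ)
  have := hq.mul hg
  convert this using 1
  · rfl
  · rfl
  · rfl
  beta_reduce
  simp only [Pi.div_apply]
  set s := Real.sqrt (1 + Real.exp x / lam) with hsdef
  clear_value s
  set u := a * Real.exp (-I x) with hudef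
  rw [← hsq]
  field_simp
  ring
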